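/- There exist constants C, c > 0 such that for every n ∈ ℕ and every u ∈ ℝ with u² ≥ 2(2n + 1): h_n(u)² ≤ C e^{−c u²}. -/

import Mathlib

/-!
Setting: `X = ℝ^{d₁} × ℝ^{d₂}` with Lebesgue measure (modelled as
`(Fin d₁ → ℝ) × (Fin d₂ → ℝ)` with `volume`), and the Grushin operator
`L = −Δ_{x′} − |x′|² Δ_{x″}`.
-/

open MeasureTheory Real Set
open scoped ENNReal NNReal

noncomputable section

/-- The `ℓ`-th Hermite function
`h_ℓ(t) = (−1)^ℓ (ℓ! 2^ℓ √π)^{−1/2} e^{t²/2} (d/dt)^ℓ e^{−t²}`. -/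
def hermiteFun (ℓ : ℕ) (t : ℝ) : ℝ :=
  (-1 : ℝ) ^ ℓ * (Real.sqrt (ℓ.factorial * 2 ^ ℓ * Real.sqrt Real.pi))⁻¹ *
    Real.exp (t ^ 2 / 2) * iteratedDeriv ℓ (fun s => Real.exp (-s ^ 2)) t

namespace HermiteAux

open Polynomial

lemma derivative_hermite (n : ℕ) :
    derivative (hermite (n+1)) = (n+1 : Polynomial ℤ) * hermite n := by
  induction n with
  | zero => simp [hermite_one, hermite_zero]
  | succ n ih =>
    rw [hermite_succ (n+1), derivative_sub, derivative_mul, derivative_X, ih]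
    rw [derivative_mul, hermite_succ n]
    simp only [derivative_add, derivative_natCast, derivative_one, add_zero, zero_add, mul_zero,
      zero_mul, sub_zero]
    push_cast
    ring

lemma hermite_three_term (n : ℕ) :
    hermite (n+2) = X * hermite (n+1) - (n+1 : Polynomial ℤ) * hermite n := by
  rw [hermite_succ (n+1), derivative_hermite]

lemma hermite_aeval_bound {n : ℕ} {x : ℝ} (hx : 8 * n ≤ x^2) :
    ∀ k, k ≤ n → |Polynomial.aeval x (Polynomial.hermite k)| ≤ (9/8)^k * |x|^k := by
  intro k
  induction k using Nat.twoStepInduction with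
  | zero => intro _; simp [Polynomial.hermite_zero]
  | one =>
      intro _
      simp only [Polynomial.hermite_one, Polynomial.aeval_X, pow_one]
      nlinarith [abs_nonneg x]
  | more k ih1 ih2 =>
      intro hk
      have h1 := ih1 (by omega)
      have h2 := ih2 (by omega)
      have hk1 : ((k:ℝ)+1) ≤ (n:ℝ) := by exact_mod_cast Nat.le_of_succ_le_succ (by omega)
      rw [hermite_three_term, map_sub, map_mul, map_mul, Polynomial.aeval_X]
      have hcast : (Polynomial.aeval x ((k : Polynomial ℤ)+1) : ℝ) = (k:ℝ)+1 := by
        simp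
      rw [hcast]
      set A := Polynomial.aeval x (hermite k) with hA
      set B := Polynomial.aeval x (hermite (k+1)) with hB
      have habs : |x * B - ((k:ℝ)+1) * A| ≤ |x| * |B| + ((k:ℝ)+1) * |A| := by
        calc |x * B - ((k:ℝ)+1) * A| ≤ |x * B| + |((k:ℝ)+1) * A| := abs_sub _ _
        _ = |x| * |B| + ((k:ℝ)+1) * |A| := by
            rw [abs_mul, abs_mul, abs_of_nonneg (by positivity : (0:ℝ) ≤ (k:ℝ)+1)]
      have hxk : ((k:ℝ)+1) * |A| ≤ (1/8) * ((9/8)^k * |x|^(k+2)) := by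
        have h8 : 8*((k:ℝ)+1) ≤ x^2 := by
          have : (8:ℝ) * n ≤ x^2 := by exact_mod_cast hx
          linarith
        have hAle : |A| ≤ (9/8)^k * |x|^k := h1
        have hpow : |x|^(k+2) = |x|^k * x^2 := by
          rw [pow_add, sq_abs]
        nlinarith [abs_nonneg A, pow_nonneg (abs_nonneg x) k,
          pow_pos (by norm_num : (0:ℝ) < 9/8) k, sq_nonneg x]
      have hx2 : |x| * |B| ≤ (9/8)^(k+1) * |x|^(k+2) := by
        have hb : |x| * |B| ≤ |x| * ((9/8)^(k+1) * |x|^(k+1)) :=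
          mul_le_mul_of_nonneg_left h2 (abs_nonneg x)
        calc |x| * |B| ≤ |x| * ((9/8)^(k+1) * |x|^(k+1)) := hb
        _ = (9/8)^(k+1) * |x|^(k+2) := by rw [pow_succ]; ring
      calc |x * B - ((k:ℝ)+1) * A| ≤ |x| * |B| + ((k:ℝ)+1) * |A| := habs
      _ ≤ (9/8)^(k+1) * |x|^(k+2) + (1/8) * ((9/8)^k * |x|^(k+2)) := by linarith
      _ ≤ (9/8)^(k+2) * |x|^(k+2) := by
          have hp : (0:ℝ) ≤ (9/8)^k := by positivity
          have hq : (0:ℝ) ≤ |x|^(k+2) := by positivity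
          have hr : (9/8:ℝ)^(k+1) = (9/8)^k * (9/8) := pow_succ _ _
          have hs : (9/8:ℝ)^(k+2) = (9/8)^k * (81/64) := by rw [pow_add]; norm_num
          nlinarith

lemma iteratedDeriv_gauss (n : ℕ) :
    ∀ t : ℝ, iteratedDeriv n (fun s => Real.exp (-s ^ 2)) t =
      (-1 : ℝ) ^ n * (Real.sqrt 2) ^ n *
        Polynomial.aeval (Real.sqrt 2 * t) (hermite n) * Real.exp (-t ^ 2) := by
  induction n with
  | zero => intro t; simp [Polynomial.hermite_zero]
  | succ n ih =>
      intro t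
      rw [iteratedDeriv_succ]
      have hfun : iteratedDeriv n (fun s => Real.exp (-s ^ 2)) =
          fun t => (-1 : ℝ) ^ n * (Real.sqrt 2) ^ n *
            Polynomial.aeval (Real.sqrt 2 * t) (hermite n) * Real.exp (-t ^ 2) := funext ih
      rw [hfun]
      have hP : HasDerivAt (fun t : ℝ => Polynomial.aeval (Real.sqrt 2 * t) (hermite n))
          (Polynomial.aeval (Real.sqrt 2 * t) (derivative (hermite n)) * Real.sqrt 2) t := by
        have h1 : HasDerivAt (fun t : ℝ => Real.sqrt 2 * t) (Real.sqrt 2) t := by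
          simpa using (hasDerivAt_id t).const_mul (Real.sqrt 2)
        have h2 := ((hermite n).hasDerivAt_aeval (Real.sqrt 2 * t)).comp t h1
        exact h2.congr_deriv (by ring)
      have hE : HasDerivAt (fun t : ℝ => Real.exp (-t ^ 2)) (-2 * t * Real.exp (-t ^ 2)) t := by
        have h1 : HasDerivAt (fun t : ℝ => -t ^ 2) (-(2 * t)) t :=
          (hasDerivAt_pow 2 t).neg.congr_deriv (by norm_num)
        simpa [mul_comm] using h1.exp
      have hc := (hP.const_mul ((-1:ℝ)^n * (Real.sqrt 2)^n)).mul hE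
      rw [show deriv (fun t => (-1:ℝ) ^ n * Real.sqrt 2 ^ n * Polynomial.aeval (Real.sqrt 2 * t) (hermite n) * Real.exp (-t ^ 2)) t = _ from hc.deriv, hermite_succ, map_sub, map_mul, Polynomial.aeval_X]
      have h2' : Real.sqrt 2 ^ 2 = (2:ℝ) := Real.sq_sqrt (by norm_num)
      rw [pow_succ (-1:ℝ), pow_succ (Real.sqrt 2)]
      linear_combination ((-1:ℝ)^n * Real.sqrt 2 ^ n * t * Real.exp (-t^2) *
        (Polynomial.aeval (Real.sqrt 2*t) (hermite n))) * h2'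

lemma pow_self_le_exp_mul_factorial (n : ℕ) :
    (n : ℝ) ^ n ≤ Real.exp 1 ^ n * n.factorial := by
  induction n with
  | zero => simp
  | succ n ih =>
      rcases Nat.eq_zero_or_pos n with h | h
      · subst h; simpa using Real.one_le_exp (by norm_num : (0:ℝ) ≤ 1)
      have hn : (0:ℝ) < n := by exact_mod_cast h
      have key : ((n:ℝ)+1) ^ n ≤ Real.exp 1 * (n:ℝ)^n := by
        have h1 : ((n:ℝ)+1) ≤ (n:ℝ) * Real.exp ((n:ℝ)⁻¹) := by
          have t := Real.add_one_le_exp ((n:ℝ)⁻¹)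
          have hni : (n:ℝ) * (n:ℝ)⁻¹ = 1 := mul_inv_cancel₀ (ne_of_gt hn)
          nlinarith [mul_le_mul_of_nonneg_left t (le_of_lt hn)]
        have h2 : ((n:ℝ)+1) ^ n ≤ ((n:ℝ) * Real.exp ((n:ℝ)⁻¹)) ^ n :=
          pow_le_pow_left₀ (by positivity) h1 n
        have h3 : ((n:ℝ) * Real.exp ((n:ℝ)⁻¹)) ^ n = (n:ℝ)^n * Real.exp 1 := by
          rw [mul_pow, ← Real.exp_nat_mul]
          congr 2
          field_simp
        rw [h3] at h2; linarith
      have heq : ((n:ℝ)+1) ^ (n+1) = ((n:ℝ)+1) * ((n:ℝ)+1)^n := by ring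
      rw [Nat.cast_succ, heq, Nat.factorial_succ]
      push_cast
      calc ((n:ℝ)+1) * ((n:ℝ)+1)^n ≤ ((n:ℝ)+1) * (Real.exp 1 * (n:ℝ)^n) := by gcongr
      _ ≤ ((n:ℝ)+1) * (Real.exp 1 * (Real.exp 1 ^ n * n.factorial)) := by gcongr
      _ = Real.exp 1 ^ (n+1) * (((n:ℝ)+1) * n.factorial) := by ring

lemma lin_bound {x : ℝ} (hx : 4 ≤ x) : 81 * Real.exp 1 / 32 * x ≤ Real.exp (7 * x / 8) := by
  have h1 : (2.7182818283:ℝ) < Real.exp 1 := Real.exp_one_gt_d9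
  have h3 : (1089:ℝ) ≤ Real.exp 1 ^ 7 := by
    calc (1089:ℝ) ≤ 2.7182^7 := by norm_num
    _ ≤ Real.exp 1 ^ 7 := pow_le_pow_left₀ (by norm_num) (by linarith) 7
  have hE : (33:ℝ) ≤ Real.exp (7/2) := by
    have h2 : Real.exp (7/2) ^ 2 = Real.exp 1 ^ 7 := by
      rw [← Real.exp_nat_mul, ← Real.exp_nat_mul]; norm_num
    nlinarith [Real.exp_pos (7/2)]
  have hsplit : Real.exp (7 * x / 8) = Real.exp (7/2) * Real.exp (7*(x-4)/8) := by
    rw [← Real.exp_add]; ring_nf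
  have hlin : 1 + 7*(x-4)/8 ≤ Real.exp (7*(x-4)/8) := by
    have := Real.add_one_le_exp (7*(x-4)/8); linarith
  have heu : Real.exp 1 < 2.7182818286 := Real.exp_one_lt_d9
  rw [hsplit]
  nlinarith [mul_le_mul_of_nonneg_left hlin (le_trans (by norm_num : (0:ℝ) ≤ 33) hE), hE, hx]

lemma hermiteFun_eq (n : ℕ) (u : ℝ) :
    hermiteFun n u = (Real.sqrt ((n.factorial : ℝ) * 2^n * Real.sqrt Real.pi))⁻¹ *
      (Real.sqrt 2)^n * Polynomial.aeval (Real.sqrt 2 * u) (hermite n) *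
        Real.exp (-(u^2)/2) := by
  unfold hermiteFun
  rw [iteratedDeriv_gauss]
  have hexp : Real.exp (u^2/2) * Real.exp (-u^2) = Real.exp (-(u^2)/2) := by
    rw [← Real.exp_add]; ring_nf
  have hsign : ((-1:ℝ)^n) * ((-1:ℝ)^n) = 1 := by
    rw [← pow_add]; exact Even.neg_one_pow ⟨n, rfl⟩
  push_cast
  linear_combination (((-1:ℝ)^n * (-1:ℝ)^n) *
      ((Real.sqrt ((n.factorial : ℝ) * 2^n * Real.sqrt Real.pi))⁻¹ * (Real.sqrt 2)^n *
        Polynomial.aeval (Real.sqrt 2 * u) (hermite n))) * hexp +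
    (Real.exp (-(u^2)/2) * ((Real.sqrt ((n.factorial : ℝ) * 2^n * Real.sqrt Real.pi))⁻¹ *
      (Real.sqrt 2)^n * Polynomial.aeval (Real.sqrt 2 * u) (hermite n))) * hsign

lemma hermiteFun_sq (n : ℕ) (u : ℝ) :
    hermiteFun n u ^ 2 = (Polynomial.aeval (Real.sqrt 2 * u) (hermite n))^2 *
      Real.exp (-u^2) / ((n.factorial : ℝ) * Real.sqrt Real.pi) := by
  have hfac : (0:ℝ) < (n.factorial : ℝ) := by exact_mod_cast n.factorial_pos
  have hpi : (0:ℝ) < Real.sqrt Real.pi := Real.sqrt_pos.mpr Real.pi_pos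
  have hprod : (0:ℝ) ≤ (n.factorial : ℝ) * 2^n * Real.sqrt Real.pi := by positivity
  have hS : (Real.sqrt ((n.factorial : ℝ) * 2^n * Real.sqrt Real.pi))^2 =
      (n.factorial : ℝ) * 2^n * Real.sqrt Real.pi := Real.sq_sqrt hprod
  have h2pow : ((Real.sqrt 2)^n)^2 = (2:ℝ)^n := by
    rw [← pow_mul, mul_comm, pow_mul, Real.sq_sqrt (by norm_num : (0:ℝ) ≤ 2)]
  have hexp2 : Real.exp (-(u^2)/2)^2 = Real.exp (-u^2) := by
    rw [sq, ← Real.exp_add]; ring_nf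
  rw [hermiteFun_eq, mul_pow, mul_pow, mul_pow, inv_pow, hS, h2pow, hexp2]
  have h2n : (0:ℝ) < (2:ℝ)^n := by positivity
  field_simp

end HermiteAux

/-- There are `C, c > 0` such that `h_n(u)² ≤ C e^{−c u²}` whenever
`u² ≥ 2(2n + 1)`. -/
theorem hermite_sq_gaussian_decay :
    ∃ C : ℝ, 0 < C ∧ ∃ c : ℝ, 0 < c ∧ ∀ (n : ℕ) (u : ℝ),
      2 * ((2 * n + 1 : ℕ) : ℝ) ≤ u ^ 2 →
        hermiteFun n u ^ 2 ≤ C * Real.exp (-c * u ^ 2) := by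
  refine ⟨1, one_pos, 1/8, by norm_num, ?_⟩
  intro n u hu
  rw [one_mul]
  have hu' : 4*(n:ℝ) + 2 ≤ u^2 := by push_cast at hu; linarith
  have hu0 : (0:ℝ) ≤ u^2 := sq_nonneg u
  have hfac : (0:ℝ) < (n.factorial : ℝ) := by exact_mod_cast n.factorial_pos
  have hpi1 : (1:ℝ) ≤ Real.sqrt Real.pi := by
    rw [show (1:ℝ) = Real.sqrt 1 by simp]
    exact Real.sqrt_le_sqrt (by linarith [Real.pi_gt_three])
  set A := Polynomial.aeval (Real.sqrt 2 * u) (Polynomial.hermite n) with hAdef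
  have key : A^2 * Real.exp (-u^2) / (n.factorial : ℝ) ≤ Real.exp (-(1/8) * u^2) := by
    rcases Nat.eq_zero_or_pos n with hn | hn
    · subst hn
      simp only [hAdef, Polynomial.hermite_zero, Polynomial.C_1, map_one, one_pow, one_mul,
        Nat.factorial_zero, Nat.cast_one, div_one]
      exact Real.exp_le_exp.mpr (by nlinarith)
    · have hn0 : (0:ℝ) < (n:ℝ) := by exact_mod_cast hn
      have hx2 : (Real.sqrt 2 * u)^2 = 2 * u^2 := by
        rw [mul_pow, Real.sq_sqrt (by norm_num : (0:ℝ) ≤ 2)]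
      have h8 : 8 * (n:ℝ) ≤ (Real.sqrt 2 * u)^2 := by rw [hx2]; linarith
      have hb := HermiteAux.hermite_aeval_bound h8 n le_rfl
      have hA2 : A^2 ≤ (81/64)^n * (2*u^2)^n := by
        calc A^2 = |A|^2 := (sq_abs A).symm
        _ ≤ ((9/8)^n * |Real.sqrt 2 * u|^n)^2 := by
            apply pow_le_pow_left₀ (abs_nonneg A) hb
        _ = (81/64)^n * (2*u^2)^n := by
            rw [mul_pow, ← pow_mul, ← pow_mul, mul_comm n 2, pow_mul, pow_mul, sq_abs, hx2]
            norm_num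
      have hx4 : (4:ℝ) ≤ u^2/(n:ℝ) := by rw [le_div_iff₀ hn0]; linarith
      have hlin := HermiteAux.lin_bound hx4
      have hpow : (81*Real.exp 1/32 * (u^2/(n:ℝ)))^n ≤ Real.exp (7*u^2/8) := by
        calc (81*Real.exp 1/32 * (u^2/(n:ℝ)))^n ≤ (Real.exp (7*(u^2/(n:ℝ))/8))^n := by
              apply pow_le_pow_left₀ (by positivity) hlin
        _ = Real.exp (7*u^2/8) := by
            rw [← Real.exp_nat_mul]
            congr 1
            field_simp
      have hone : (1:ℝ) ≤ Real.exp 1 ^ n / (n:ℝ)^n * (n.factorial : ℝ) := by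
        rw [div_mul_eq_mul_div, le_div_iff₀ (by positivity : (0:ℝ) < (n:ℝ)^n), one_mul]
        exact HermiteAux.pow_self_le_exp_mul_factorial n
      have h1eq : (81*Real.exp 1/32 * (u^2/(n:ℝ)))^n =
          (81/64)^n * (2*u^2)^n * (Real.exp 1 ^ n / (n:ℝ)^n) := by
        rw [← div_pow, ← mul_pow, ← mul_pow]
        congr 1
        field_simp
        ring
      have hstep : (81/64:ℝ)^n * (2*u^2)^n / (n.factorial : ℝ) ≤
          (81*Real.exp 1/32 * (u^2/(n:ℝ)))^n := by
        rw [div_le_iff₀ hfac, h1eq]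
        calc (81/64:ℝ)^n * (2*u^2)^n = (81/64)^n * (2*u^2)^n * 1 := by ring
        _ ≤ (81/64)^n * (2*u^2)^n * (Real.exp 1 ^ n / (n:ℝ)^n * (n.factorial : ℝ)) := by
            have hc : (0:ℝ) ≤ (81/64:ℝ)^n * (2*u^2)^n := by positivity
            nlinarith
        _ = (81/64)^n * (2*u^2)^n * (Real.exp 1 ^ n / (n:ℝ)^n) * (n.factorial : ℝ) := by ring
      calc A^2 * Real.exp (-u^2) / (n.factorial : ℝ)
          ≤ (81/64)^n * (2*u^2)^n / (n.factorial : ℝ) * Real.exp (-u^2) := by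
            rw [div_mul_eq_mul_div]
            gcongr
      _ ≤ (81*Real.exp 1/32 * (u^2/(n:ℝ)))^n * Real.exp (-u^2) := by
            gcongr
      _ ≤ Real.exp (7*u^2/8) * Real.exp (-u^2) := by
            gcongr
      _ = Real.exp (-(1/8) * u^2) := by rw [← Real.exp_add]; ring_nf
  calc hermiteFun n u ^ 2
      = A^2 * Real.exp (-u^2) / ((n.factorial : ℝ) * Real.sqrt Real.pi) :=
        HermiteAux.hermiteFun_sq n u
  _ = (A^2 * Real.exp (-u^2) / (n.factorial : ℝ)) / Real.sqrt Real.pi := by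
        rw [div_div]
  _ ≤ A^2 * Real.exp (-u^2) / (n.factorial : ℝ) := by
        apply div_le_self (by positivity) hpi1
  _ ≤ Real.exp (-(1/8) * u^2) := key

end
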